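/- Let k ∈ ℕ and s ∈ [k−1, k). Let α > k−1, β ∈ ℝ, and n ∈ ℕ. Then for every x ∈ (−1, 1), the right Caputo fractional derivative satisfies ^C D_+^s[ (1−·)^α P_n^{(α,β)} ](x) = [Γ(n+α+1)/Γ(n+α−s+1)] · (1−x)^{α−s} · P_n^{(α−s, β+s)}(x); that is, ^C D_+^s[^+J_n^{(−α,β)}] = [Γ(n+α+1)/Γ(n+α−s+1)] · ^+J_n^{(−α+s, β+s)} on (−1,1). -/

import Mathlib

open MeasureTheory Filter Finset

/-- Jacobi polynomial with real parameters. -/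
noncomputable def jacobiP (a b : ℝ) (n : ℕ) (x : ℝ) : ℝ :=
  ∑ j ∈ Finset.range (n + 1),
    ((ascPochhammer ℝ j).eval ((n : ℝ) + a + b + 1) / (Nat.factorial j : ℝ)) *
      ((ascPochhammer ℝ (n - j)).eval (a + (j : ℝ) + 1) / (Nat.factorial (n - j) : ℝ)) *
      ((x - 1) / 2) ^ j

/-- Right Riemann-Liouville fractional integral on (-1,1). -/
noncomputable def Iplus (ρ : ℝ) (v : ℝ → ℝ) (x : ℝ) : ℝ :=
  (1 / Real.Gamma ρ) * ∫ y in x..1, (y - x) ^ (ρ - 1) * v y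

/-- Left Riemann-Liouville fractional integral on (-1,1). -/
noncomputable def Iminus (ρ : ℝ) (v : ℝ → ℝ) (x : ℝ) : ℝ :=
  (1 / Real.Gamma ρ) * ∫ y in (-1 : ℝ)..x, (x - y) ^ (ρ - 1) * v y

/-- Right Riemann-Liouville fractional derivative of order `s ∈ [k-1,k)`. -/
noncomputable def Dplus (s : ℝ) (k : ℕ) (v : ℝ → ℝ) (x : ℝ) : ℝ :=
  (-1 : ℝ) ^ k * iteratedDeriv k (Iplus ((k : ℝ) - s) v) x

/-- Left Riemann-Liouville fractional derivative of order `s ∈ [k-1,k)`. -/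
noncomputable def Dminus (s : ℝ) (k : ℕ) (v : ℝ → ℝ) (x : ℝ) : ℝ :=
  iteratedDeriv k (Iminus ((k : ℝ) - s) v) x

/-- Right Caputo fractional derivative of order `s ∈ [k-1,k)`. -/
noncomputable def CDplus (s : ℝ) (k : ℕ) (v : ℝ → ℝ) (x : ℝ) : ℝ :=
  ((-1 : ℝ) ^ k / Real.Gamma ((k : ℝ) - s)) *
    ∫ y in x..1, (y - x) ^ ((k : ℝ) - s - 1) * iteratedDeriv k v y

/-- Generalized Jacobi function `⁺J_n^{(-α,β)}(x) = (1-x)^α P_n^{(α,β)}(x)` (for `α > -1`). -/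
noncomputable def GJFplus (α β : ℝ) (n : ℕ) (x : ℝ) : ℝ :=
  (1 - x) ^ α * jacobiP α β n x

section Helpers

lemma gamma_prod (m : ℝ) : ∀ (k : ℕ), 0 < m - k + 1 →
    Real.Gamma (m + 1) = (∏ i ∈ Finset.range k, (m - i)) * Real.Gamma (m - k + 1) := by
  intro k
  induction k with
  | zero => intro _; simp
  | succ k ih =>
    intro h
    push_cast at h ⊢
    have h2 : 0 < m - k + 1 := by linarith
    have h3 : (m - k : ℝ) ≠ 0 := by linarith
    rw [Finset.prod_range_succ]
    have : m - (k + 1) + 1 = m - k - 1 + 1 := by ring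
    rw [ih h2, this]
    have h4 : Real.Gamma (m - k - 1 + 1 + 1) = (m - k - 1 + 1) * Real.Gamma (m - k - 1 + 1) := by
      exact Real.Gamma_add_one (by linarith)
    have h5 : m - k + 1 = m - k - 1 + 1 + 1 := by ring
    rw [h5, h4]
    ring

lemma poch_gamma (a : ℝ) (ha : 0 < a) : ∀ m : ℕ,
    (ascPochhammer ℝ m).eval a = Real.Gamma (a + m) / Real.Gamma a := by
  intro m
  induction m with
  | zero => simp [Real.Gamma_pos_of_pos ha |>.ne']
  | succ m ih =>
    rw [ascPochhammer_succ_right]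
    simp only [Polynomial.eval_mul, Polynomial.eval_add, Polynomial.eval_X,
      Polynomial.eval_natCast, ih]
    have hpos : (0:ℝ) < a + m := by positivity
    have : Real.Gamma (a + (m + 1 : ℕ)) = (a + m) * Real.Gamma (a + m) := by
      push_cast
      rw [show a + (m + 1 : ℝ) = (a + m) + 1 by ring, Real.Gamma_add_one hpos.ne']
    rw [this]
    field_simp

lemma real_beta {p q : ℝ} (hp : 0 < p) (hq : 0 < q) :
    ∫ t in (0:ℝ)..1, t ^ (p - 1) * (1 - t) ^ (q - 1)
      = Real.Gamma p * Real.Gamma q / Real.Gamma (p + q) := by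
  have key := Complex.Gamma_mul_Gamma_eq_betaIntegral (s := (p:ℂ)) (t := (q:ℂ))
    (by simpa using hp) (by simpa using hq)
  have h1 : Complex.betaIntegral p q
      = ((∫ t in (0:ℝ)..1, t ^ (p - 1) * (1 - t) ^ (q - 1) : ℝ) : ℂ) := by
    rw [Complex.betaIntegral, ← intervalIntegral.integral_ofReal]
    refine intervalIntegral.integral_congr fun t ht => ?_
    rw [Set.uIcc_of_le (by norm_num : (0:ℝ) ≤ 1)] at ht
    rw [Complex.ofReal_mul, Complex.ofReal_cpow ht.1, Complex.ofReal_cpow (by linarith [ht.2])]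
    push_cast
    ring
  rw [h1] at key
  have hg : Real.Gamma (p + q) ≠ 0 := (Real.Gamma_pos_of_pos (by linarith)).ne'
  have key2 : Real.Gamma p * Real.Gamma q
      = Real.Gamma (p + q) * ∫ t in (0:ℝ)..1, t ^ (p - 1) * (1 - t) ^ (q - 1) := by
    have := key
    rw [← Complex.ofReal_add, Complex.Gamma_ofReal, Complex.Gamma_ofReal,
      Complex.Gamma_ofReal] at this
    exact_mod_cast this
  rw [key2]
  field_simp


lemma beta_integrable {x p q : ℝ} (hx : x < 1) (hp : 0 < p) (hq : 0 < q) :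
    IntervalIntegrable (fun y => (y - x) ^ (p - 1) * (1 - y) ^ (q - 1)) volume x 1 := by
  set m : ℝ := (x + 1) / 2 with hm
  have hxm : x < m := by rw [hm]; linarith
  have hm1 : m < 1 := by rw [hm]; linarith
  apply IntervalIntegrable.trans (b := m)
  · have h1 : IntervalIntegrable (fun y : ℝ => (y - x) ^ (p - 1)) volume x m := by
      have := (intervalIntegral.intervalIntegrable_rpow' (a := 0) (b := m - x)
        (by linarith : (-1:ℝ) < p - 1)).comp_sub_right x
      simpa using this
    refine h1.mul_continuousOn ?_
    refine ContinuousOn.rpow_const (by fun_prop) fun y hy => Or.inl ?_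
    rw [Set.uIcc_of_le hxm.le] at hy
    have : y ≤ m := hy.2
    intro h; rw [sub_eq_zero] at h; linarith
  · have h2 : IntervalIntegrable (fun y : ℝ => (1 - y) ^ (q - 1)) volume m 1 := by
      have := (intervalIntegral.intervalIntegrable_rpow' (a := 1 - m) (b := 0)
        (by linarith : (-1:ℝ) < q - 1)).comp_sub_left 1
      simpa using this
    refine h2.continuousOn_mul ?_
    refine ContinuousOn.rpow_const (by fun_prop) fun y hy => Or.inl ?_
    rw [Set.uIcc_of_le hm1.le] at hy
    have : m ≤ y := hy.1
    intro h; rw [sub_eq_zero] at h; linarith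

lemma beta_shift {x p q : ℝ} (hx : x < 1) (hp : 0 < p) (hq : 0 < q) :
    ∫ y in x..1, (y - x) ^ (p - 1) * (1 - y) ^ (q - 1)
      = (1 - x) ^ (p + q - 1) * (Real.Gamma p * Real.Gamma q / Real.Gamma (p + q)) := by
  have h0 : (0:ℝ) < 1 - x := by linarith
  have hsub := intervalIntegral.integral_comp_mul_add (a := (0:ℝ)) (b := 1)
    (f := fun y => (y - x) ^ (p - 1) * (1 - y) ^ (q - 1)) (c := 1 - x) h0.ne' x
  simp only [mul_zero, zero_add, mul_one, sub_add_cancel, smul_eq_mul] at hsub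
  have h2 : ∫ t in (0:ℝ)..1, ((1 - x) * t + x - x) ^ (p - 1) * (1 - ((1 - x) * t + x)) ^ (q - 1)
      = (1 - x) ^ (p - 1) * (1 - x) ^ (q - 1)
        * ∫ t in (0:ℝ)..1, t ^ (p - 1) * (1 - t) ^ (q - 1) := by
    rw [← intervalIntegral.integral_const_mul]
    refine intervalIntegral.integral_congr fun t ht => ?_
    rw [Set.uIcc_of_le (by norm_num : (0:ℝ) ≤ 1)] at ht
    have e1 : (1 - x) * t + x - x = (1 - x) * t := by ring
    have e2 : 1 - ((1 - x) * t + x) = (1 - x) * (1 - t) := by ring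
    rw [e1, e2, Real.mul_rpow h0.le ht.1, Real.mul_rpow h0.le (by linarith [ht.2])]
    ring
  rw [h2, real_beta hp hq] at hsub
  have : ∫ y in x..1, (y - x) ^ (p - 1) * (1 - y) ^ (q - 1)
      = (1 - x) * ((1 - x) ^ (p - 1) * (1 - x) ^ (q - 1)
        * (Real.Gamma p * Real.Gamma q / Real.Gamma (p + q))) := by
    have hg : Real.Gamma (p + q) ≠ 0 := (Real.Gamma_pos_of_pos (by linarith)).ne'
    field_simp at hsub ⊢
    linear_combination -hsub
  rw [this]
  have hpow : (1 - x) * ((1 - x) ^ (p - 1) * (1 - x) ^ (q - 1)) = (1 - x) ^ (p + q - 1) := by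
    nth_rw 1 [← Real.rpow_one (1 - x)]
    rw [← Real.rpow_add h0, ← Real.rpow_add h0]
    ring_nf
  rw [← hpow]; ring


lemma iter_sum (N : ℕ) (a : ℕ → ℝ) (α : ℝ) (v : ℝ → ℝ)
    (hv : ∀ t < 1, v t = ∑ j ∈ Finset.range N, a j * (1 - t) ^ (α + j)) :
    ∀ (k : ℕ), ∀ y < 1, iteratedDeriv k v y
      = ∑ j ∈ Finset.range N, a j * ((-1 : ℝ) ^ k * ∏ i ∈ Finset.range k, (α + j - i))
          * (1 - y) ^ (α + j - k) := by
  intro k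
  induction k with
  | zero =>
    intro y hy
    simpa using hv y hy
  | succ k ih =>
    intro y hy
    rw [iteratedDeriv_succ]
    have hEq : iteratedDeriv k v =ᶠ[nhds y]
        (fun z => ∑ j ∈ Finset.range N,
          a j * ((-1 : ℝ) ^ k * ∏ i ∈ Finset.range k, (α + j - i)) * (1 - z) ^ (α + j - k)) :=
      Filter.eventuallyEq_of_mem (Iio_mem_nhds hy) (fun z hz => ih z hz)
    rw [hEq.deriv_eq]
    have hder : HasDerivAt
        (fun z => ∑ j ∈ Finset.range N,
          a j * ((-1 : ℝ) ^ k * ∏ i ∈ Finset.range k, (α + j - i)) * (1 - z) ^ (α + j - k))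
        (∑ j ∈ Finset.range N,
          a j * ((-1 : ℝ) ^ k * ∏ i ∈ Finset.range k, (α + j - i))
            * (-1 * (α + j - k) * (1 - y) ^ (α + j - k - 1))) y := by
      refine HasDerivAt.fun_sum fun j _ => ?_
      have h1 : HasDerivAt (fun z : ℝ => 1 - z) (-1) y := by
        simpa using (hasDerivAt_const y (1:ℝ)).fun_sub (hasDerivAt_id y)
      have h2 : HasDerivAt (fun z : ℝ => (1 - z) ^ (α + j - k))
          (-1 * (α + j - k) * (1 - y) ^ (α + j - k - 1)) y :=
        h1.rpow_const (Or.inl (by intro h; rw [sub_eq_zero] at h; linarith))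
      exact h2.const_mul _
    rw [hder.deriv]
    refine Finset.sum_congr rfl fun j _ => ?_
    have e1 : α + j - (k + 1 : ℕ) = α + j - k - 1 := by push_cast; ring
    rw [e1, Finset.prod_range_succ]
    push_cast
    ring

end Helpers

/-- Theorem 6.2, right Caputo fractional derivative of GJFs. -/
theorem stmt19 (k : ℕ) (hk : 1 ≤ k) (s : ℝ) (hs1 : (k : ℝ) - 1 ≤ s) (hs2 : s < k)
    (α β : ℝ) (hα : (k : ℝ) - 1 < α) (n : ℕ) :
    ∀ x ∈ Set.Ioo (-1 : ℝ) 1,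
      CDplus s k (fun y => (1 - y) ^ α * jacobiP α β n y) x =
        Real.Gamma ((n : ℝ) + α + 1) / Real.Gamma ((n : ℝ) + α - s + 1) *
          ((1 - x) ^ (α - s) * jacobiP (α - s) (β + s) n x) ∧
      CDplus s k (GJFplus α β n) x =
        Real.Gamma ((n : ℝ) + α + 1) / Real.Gamma ((n : ℝ) + α - s + 1) *
          GJFplus (α - s) (β + s) n x := by
  intro x hx
  obtain ⟨hx1, hx2⟩ := hx
  have h0x : (0:ℝ) < 1 - x := by linarith
  have hk1 : (1:ℝ) ≤ k := by exact_mod_cast hk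
  have hks : 0 < (k:ℝ) - s := by linarith
  have hαpos : 0 < α := by linarith
  have hαk : 0 < α - k + 1 := by linarith
  suffices h : CDplus s k (fun y => (1 - y) ^ α * jacobiP α β n y) x =
      Real.Gamma ((n : ℝ) + α + 1) / Real.Gamma ((n : ℝ) + α - s + 1) *
        ((1 - x) ^ (α - s) * jacobiP (α - s) (β + s) n x) by
    exact ⟨h, h⟩
  set d : ℕ → ℝ := fun j =>
    ((ascPochhammer ℝ j).eval ((n : ℝ) + α + β + 1) / (Nat.factorial j : ℝ)) *
      ((ascPochhammer ℝ (n - j)).eval (α + (j : ℝ) + 1) / (Nat.factorial (n - j) : ℝ)) with hd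
  set a : ℕ → ℝ := fun j => d j * (-1/2 : ℝ) ^ j with ha
  -- the function agrees with a sum of powers on (-∞, 1)
  have hv : ∀ t < 1, (1 - t) ^ α * jacobiP α β n t
      = ∑ j ∈ Finset.range (n+1), a j * (1 - t) ^ (α + j) := by
    intro t ht
    have h0 : (0:ℝ) < 1 - t := by linarith
    rw [jacobiP, Finset.mul_sum]
    refine Finset.sum_congr rfl fun j hj => ?_
    have e1 : ((t - 1)/2)^j = (-1/2 : ℝ)^j * (1 - t)^j := by
      rw [← mul_pow]; congr 1; ring
    rw [e1, Real.rpow_add h0, Real.rpow_natCast, ha, hd]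
    ring
  have hder := iter_sum (n+1) a α _ hv k
  -- rewrite the integrand a.e.
  have hone : ∀ᵐ (y : ℝ) ∂volume, y ≠ 1 := by
    rw [ae_iff]
    simpa [not_not, Set.setOf_eq_eq_singleton] using measure_singleton (1:ℝ)
  have hcong : ∫ y in x..1, (y - x) ^ ((k : ℝ) - s - 1)
        * iteratedDeriv k (fun y => (1 - y) ^ α * jacobiP α β n y) y
      = ∫ y in x..1, ∑ j ∈ Finset.range (n+1),
          (a j * ((-1 : ℝ) ^ k * ∏ i ∈ Finset.range k, (α + j - i)))
            * ((y - x) ^ ((k : ℝ) - s - 1) * (1 - y) ^ (α + j - k)) := by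
    refine intervalIntegral.integral_congr_ae ?_
    filter_upwards [hone] with y hy1 hmem
    rw [Set.uIoc_of_le hx2.le] at hmem
    have hylt : y < 1 := lt_of_le_of_ne hmem.2 hy1
    rw [hder y hylt, Finset.mul_sum]
    exact Finset.sum_congr rfl fun j _ => by ring
  have hq : ∀ j : ℕ, (0:ℝ) < α + j - k + 1 := fun j => by
    have : (0:ℝ) ≤ j := Nat.cast_nonneg j
    linarith
  have hint : ∀ j ∈ Finset.range (n+1), IntervalIntegrable
      (fun y => (a j * ((-1 : ℝ) ^ k * ∏ i ∈ Finset.range k, (α + j - i)))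
        * ((y - x) ^ ((k : ℝ) - s - 1) * (1 - y) ^ (α + j - k))) volume x 1 := by
    intro j _
    have := (beta_integrable (q := α + j - k + 1) hx2 hks (hq j)).const_mul
      (a j * ((-1 : ℝ) ^ k * ∏ i ∈ Finset.range k, (α + j - i)))
    simpa [show α + (j:ℝ) - k + 1 - 1 = α + j - k from by ring] using this
  have hval : ∀ j ∈ Finset.range (n+1),
      ∫ y in x..1, (y - x) ^ ((k : ℝ) - s - 1) * (1 - y) ^ (α + j - k)
        = (1 - x) ^ (α + j - s) * (Real.Gamma ((k:ℝ) - s) * Real.Gamma (α + j - k + 1)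
            / Real.Gamma (α + j - s + 1)) := by
    intro j _
    have := beta_shift (q := α + j - k + 1) hx2 hks (hq j)
    rw [show α + (j:ℝ) - k + 1 - 1 = α + j - k from by ring,
      show (k:ℝ) - s + (α + j - k + 1) - 1 = α + j - s from by ring,
      show (k:ℝ) - s + (α + j - k + 1) = α + j - s + 1 from by ring] at this
    exact this
  rw [CDplus, hcong, intervalIntegral.integral_finset_sum hint]
  simp only [intervalIntegral.integral_const_mul]
  -- now turn both sides into sums and compare termwise
  rw [jacobiP, Finset.mul_sum, Finset.mul_sum, Finset.mul_sum]
  refine Finset.sum_congr rfl fun j hj => ?_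
  have hjn : j ≤ n := Nat.lt_succ_iff.mp (Finset.mem_range.mp hj)
  rw [hval j hj]
  -- gamma facts
  have hG : ∀ t : ℝ, 0 < t → Real.Gamma t ≠ 0 := fun t ht => (Real.Gamma_pos_of_pos ht).ne'
  have hprod : (∏ i ∈ Finset.range k, (α + j - i))
      = Real.Gamma (α + j + 1) / Real.Gamma (α + j - k + 1) := by
    have := gamma_prod (α + j) k (hq j)
    have hne := (Real.Gamma_pos_of_pos (hq j)).ne'
    rw [this, mul_div_assoc, div_self hne, mul_one]
  have hpoch1 : (ascPochhammer ℝ (n - j)).eval (α + (j : ℝ) + 1)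
      = Real.Gamma (α + n + 1) / Real.Gamma (α + j + 1) := by
    rw [poch_gamma _ (by positivity) (n - j),
      show α + (j:ℝ) + 1 + ((n - j : ℕ) : ℝ) = α + n + 1 from by
        rw [Nat.cast_sub hjn]; ring]
  have hpoch2 : (ascPochhammer ℝ (n - j)).eval (α - s + (j : ℝ) + 1)
      = Real.Gamma (α - s + n + 1) / Real.Gamma (α - s + j + 1) := by
    rw [poch_gamma _ (by linarith [Nat.cast_nonneg (α := ℝ) j]) (n - j),
      show α - s + (j:ℝ) + 1 + ((n - j : ℕ) : ℝ) = α - s + n + 1 from by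
        rw [Nat.cast_sub hjn]; ring]
  have e2 : ((x - 1)/2)^j = (-1/2 : ℝ)^j * (1 - x)^j := by
    rw [← mul_pow]; congr 1; ring
  have e3 : (1 - x) ^ (α + j - s) = (1 - x) ^ (α - s) * (1 - x)^j := by
    rw [show α + (j:ℝ) - s = (α - s) + j from by ring, Real.rpow_add h0x, Real.rpow_natCast]
  have e4 : (n:ℝ) + (α - s) + (β + s) + 1 = (n:ℝ) + α + β + 1 := by ring
  have e5 : (n:ℝ) + α + 1 = α + n + 1 := by ring
  have e6 : (n:ℝ) + α - s + 1 = α - s + n + 1 := by ring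
  have eneg : ((-1:ℝ))^k * (-1)^k = 1 := by
    rw [← pow_add]; exact Even.neg_one_pow ⟨k, rfl⟩
  simp only [ha, hd]
  rw [e4, hprod, hpoch1, hpoch2, e2, e3, e5, e6]
  have h1 := hG _ (hq j)
  have h2 := hG _ hks
  have h3 : Real.Gamma (α + j + 1) ≠ 0 := hG _ (by positivity)
  have h4 : Real.Gamma (α + j - s + 1) ≠ 0 := hG _ (by
    have : (0:ℝ) ≤ j := Nat.cast_nonneg j
    linarith)
  have h5 : Real.Gamma (α - s + n + 1) ≠ 0 := hG _ (by
    have : (0:ℝ) ≤ n := Nat.cast_nonneg n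
    linarith)
  have h6 : Real.Gamma (α - s + j + 1) ≠ 0 := hG _ (by
    have : (0:ℝ) ≤ j := Nat.cast_nonneg j
    linarith)
  have h7 : (Nat.factorial j : ℝ) ≠ 0 := by positivity
  have h8 : (Nat.factorial (n - j) : ℝ) ≠ 0 := by positivity
  have e7 : α + (j:ℝ) - s + 1 = α - s + j + 1 := by ring
  rw [e7] at *
  field_simp
  ring_nf
  rw [show ((-1:ℝ)) ^ (k * 2) = 1 by rw [mul_comm, pow_mul]; norm_num]
  ring
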